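/- Point-selection lemma: for every l ∈ ℕ and n ∈ ℕ there exists N(l,n) ∈ ℕ such that among any N(l,n) distinct points in ℝⁿ one can choose points x₀, x₁, …, x_l with |x₀ − x_i| > 2|x₀ − x_{i−1}| for all 2 ≤ i ≤ l. -/
import Mathlib


open Metric Set

/-- The unit closed ball of `ℝⁿ` is covered by finitely many balls of radius `1/18`. -/
lemma cover18 (n : ℕ) : ∃ T : Finset (EuclideanSpace ℝ (Fin n)),
    closedBall (0 : EuclideanSpace ℝ (Fin n)) 1 ⊆ ⋃ t ∈ T, ball t (1/18) := by
  classical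
  have hc : TotallyBounded (closedBall (0 : EuclideanSpace ℝ (Fin n)) 1) :=
    (isCompact_closedBall _ _).totallyBounded
  obtain ⟨t, htfin, hcov⟩ := Metric.totallyBounded_iff.mp hc (1/18) (by norm_num)
  refine ⟨htfin.toFinset, ?_⟩
  simpa [Set.Finite.mem_toFinset] using hcov

/-- Point-selection lemma: among sufficiently many distinct points in ℝⁿ, one can
choose `x₀,…,x_l` with `|x₀ − x_i| > 2 |x₀ − x_{i−1}|` for `2 ≤ i ≤ l`. -/
theorem point_selection (l n : ℕ) :
    ∃ N : ℕ, ∀ X : Finset (EuclideanSpace ℝ (Fin n)), N ≤ X.card →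
      ∃ x : ℕ → EuclideanSpace ℝ (Fin n),
        (∀ i ≤ l, x i ∈ X) ∧
        Set.InjOn x {i | i ≤ l} ∧
        ∀ i : ℕ, 2 ≤ i → i ≤ l →
          dist (x 0) (x i) > 2 * dist (x 0) (x (i - 1)) := by
  classical
  induction l with
  | zero =>
    refine ⟨1, fun X hX => ?_⟩
    obtain ⟨a, ha⟩ := Finset.card_pos.mp hX
    refine ⟨fun _ => a, fun i _ => ha, ?_, ?_⟩
    · intro i hi j hj _
      simp only [Set.mem_setOf_eq, Nat.le_zero] at hi hj
      omega
    · intro i h2 h0; omega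
  | succ m ih =>
    obtain ⟨N', hN'⟩ := ih
    obtain ⟨T, hT⟩ := cover18 n
    refine ⟨T.card * N' + 2, fun X hX => ?_⟩
    -- two distinct points
    obtain ⟨a, ha, b, hb, hab⟩ := Finset.one_lt_card.mp (show 1 < X.card by omega)
    have hne : (X ×ˢ X).Nonempty := ⟨(a, b), Finset.mem_product.mpr ⟨ha, hb⟩⟩
    obtain ⟨pq, hpq, hmax⟩ := Finset.exists_max_image (X ×ˢ X) (fun z => dist z.1 z.2) hne
    obtain ⟨hpX, hqX⟩ := Finset.mem_product.mp hpq
    set p := pq.1 with hp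
    set q := pq.2 with hq
    set D := dist p q with hD
    have hmax' : ∀ y ∈ X, ∀ y' ∈ X, dist y y' ≤ D := fun y hy y' hy' =>
      hmax (y, y') (Finset.mem_product.mpr ⟨hy, hy'⟩)
    have hDpos : 0 < D :=
      lt_of_lt_of_le (dist_pos.mpr hab) (hmax (a, b) (Finset.mem_product.mpr ⟨ha, hb⟩))
    -- classification of points by covering ball
    have hchoice : ∀ y ∈ X, ∃ t ∈ T, dist (D⁻¹ • (y - p)) t < 1/18 := by
      intro y hy
      have hmem : D⁻¹ • (y - p) ∈ closedBall (0 : EuclideanSpace ℝ (Fin n)) 1 := by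
        rw [mem_closedBall_zero_iff, norm_smul]
        have h1 : ‖y - p‖ ≤ D := by
          rw [← dist_eq_norm]; exact hmax' y hy p hpX
        have h2 : ‖D⁻¹‖ = D⁻¹ := by
          rw [Real.norm_eq_abs, abs_of_pos (inv_pos.mpr hDpos)]
        rw [h2]
        calc D⁻¹ * ‖y - p‖ ≤ D⁻¹ * D := by
              exact mul_le_mul_of_nonneg_left h1 (inv_pos.mpr hDpos).le
          _ = 1 := inv_mul_cancel₀ hDpos.ne'
      have := hT hmem
      simp only [Set.mem_iUnion, mem_ball, exists_prop] at this
      exact this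
    choose! f hfT hfd using hchoice
    have hTne : T.Nonempty := ⟨f a, hfT a ha⟩
    obtain ⟨t0, ht0, hfib⟩ := Finset.exists_le_card_fiber_of_mul_le_card_of_maps_to
      (fun y hy => hfT y hy) hTne (le_trans (Nat.le_add_right (T.card * N') 2) hX)
    set S : Finset (EuclideanSpace ℝ (Fin n)) := {x ∈ X | f x = t0} with hS
    have hSX : ∀ y ∈ S, y ∈ X := fun y hy => (Finset.mem_filter.mp hy).1
    have hSd : ∀ y ∈ S, ∀ y' ∈ S, dist y y' < D / 9 := by
      intro y hy y' hy'
      obtain ⟨hyX, hyf⟩ := Finset.mem_filter.mp hy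
      obtain ⟨hy'X, hy'f⟩ := Finset.mem_filter.mp hy'
      have h1 := hfd y hyX
      have h2 := hfd y' hy'X
      rw [hyf] at h1
      rw [hy'f] at h2
      have h3 : dist (D⁻¹ • (y - p)) (D⁻¹ • (y' - p)) < 1/9 := by
        calc dist (D⁻¹ • (y - p)) (D⁻¹ • (y' - p))
            ≤ dist (D⁻¹ • (y - p)) t0 + dist t0 (D⁻¹ • (y' - p)) := dist_triangle _ _ _
          _ < 1/18 + 1/18 := by rw [dist_comm t0]; linarith
          _ = 1/9 := by norm_num
      rw [dist_smul₀, dist_sub_right, Real.norm_eq_abs,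
        abs_of_pos (inv_pos.mpr hDpos)] at h3
      have := (inv_mul_lt_iff₀ hDpos).mp h3
      linarith
    -- apply induction hypothesis in S
    obtain ⟨x, hxS, hinj, hchain⟩ := hN' S hfib
    have hx0 : x 0 ∈ S := hxS 0 (Nat.zero_le _)
    -- a far point
    have hfar : ∃ z ∈ X, D / 2 ≤ dist (x 0) z := by
      rcases le_or_gt (D / 2) (dist (x 0) p) with h | h
      · exact ⟨p, hpX, h⟩
      · refine ⟨q, hqX, ?_⟩
        have := dist_triangle p (x 0) q
        rw [dist_comm p (x 0)] at this
        linarith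
    obtain ⟨z, hzX, hzd⟩ := hfar
    have hxd : ∀ j ≤ m, dist (x 0) (x j) < D / 9 := fun j hj =>
      hSd _ hx0 _ (hxS j hj)
    have hzne : ∀ j ≤ m, z ≠ x j := by
      intro j hj he
      have := hxd j hj
      rw [← he] at this
      linarith
    refine ⟨fun i => if i = m + 1 then z else x i, ?_, ?_, ?_⟩
    · intro i hi
      by_cases h : i = m + 1
      · simpa [h] using hzX
      · have : i ≤ m := by omega
        simpa [h] using hSX _ (hxS i this)
    · intro i hi j hj heq
      simp only [Set.mem_setOf_eq] at hi hj
      by_cases h1 : i = m + 1 <;> by_cases h2 : j = m + 1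
      · omega
      · exfalso; simp only [h1, if_pos, if_neg h2, if_neg] at heq
        exact hzne j (by omega) heq
      · exfalso; simp only [if_neg h1, h2, if_pos] at heq
        exact hzne i (by omega) heq.symm
      · simp only [if_neg h1, if_neg h2] at heq
        exact hinj (by simpa using (by omega : i ≤ m)) (by simpa using (by omega : j ≤ m)) heq
    · intro i h2 hil
      have h0 : (0 : ℕ) ≠ m + 1 := by omega
      by_cases h : i = m + 1
      · beta_reduce
        rw [if_neg h0, if_pos h, show i - 1 = m from by omega,
          if_neg (show m ≠ m + 1 by omega)]
        have hxm := hxd m (le_refl m)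
        calc 2 * dist (x 0) (x m) < 2 * (D / 9) := by linarith
          _ < D / 2 := by linarith
          _ ≤ dist (x 0) z := hzd
      · have hi1 : i - 1 ≠ m + 1 := by omega
        beta_reduce
        rw [if_neg h0, if_neg h, if_neg hi1]
        exact hchain i h2 (by omega)
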